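/- Let w, v be words over {a, b} with the same content such that conv(γ^{w,a}) = conv(γ^{v,a}) and conv(γ^{w,b}) = conv(γ^{v,b}). Then the lattice meet w ∧ v and join w ∨ v (taken in the distributive lattice of staircase paths with this content) also satisfy conv(γ^{w∧v,a}) = conv(γ^{w,a}), conv(γ^{w∧v,b}) = conv(γ^{w,b}), conv(γ^{w∨v,a}) = conv(γ^{w,a}), and conv(γ^{w∨v,b}) = conv(γ^{w,b}). -/

import Mathlib

/-- The letter `a` of the two-letter alphabet, encoded as `true`. -/
def ltrA : Bool := true

/-- The letter `b` of the two-letter alphabet, encoded as `false`. -/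
def ltrB : Bool := false

/-- `alphaH w i` is the number of `b`'s occurring before the `(i+1)`-th `a` in `w`. -/
def alphaH : List Bool → ℕ → ℕ
  | [], _ => 0
  | (x :: rest), i =>
      if x = ltrA then (if i = 0 then 0 else alphaH rest (i - 1))
      else alphaH rest i + 1

/-- `betaH w i` is the number of `a`'s occurring before the `(i+1)`-th `b` in `w`. -/
def betaH (w : List Bool) (i : ℕ) : ℕ := alphaH (w.map (!·)) i

/-- The `a`-height `γ^{w,a} = {(i, α^w_i) : 0 ≤ i < ℓ_a}`, as a subset of `ℝ²`. -/
def gammaA (w : List Bool) : Set (ℝ × ℝ) :=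
  {p | ∃ i, i < w.count ltrA ∧ p = ((i : ℝ), (alphaH w i : ℝ))}

/-- The `b`-height `γ^{w,b} = {(β^w_i, i) : 0 ≤ i < ℓ_b}`, as a subset of `ℝ²`. -/
def gammaB (w : List Bool) : Set (ℝ × ℝ) :=
  {p | ∃ i, i < w.count ltrB ∧ p = ((betaH w i : ℝ), (i : ℝ))}

lemma alphaH_le_countB (w : List Bool) (i : ℕ) : alphaH w i ≤ w.count ltrB := by
  induction w generalizing i with
  | nil => simp [alphaH]
  | cons x rest ih =>
    cases x
    · have : alphaH (false :: rest) i = alphaH rest i + 1 := by simp [alphaH, ltrA]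
      rw [this]
      have hc : (false :: rest).count ltrB = rest.count ltrB + 1 := by
        simp [ltrB, List.count_cons]
      rw [hc]; exact Nat.succ_le_succ (ih i)
    · have hc : (true :: rest).count ltrB = rest.count ltrB := by
        simp [ltrB, List.count_cons]
      rw [hc]
      rcases Nat.eq_zero_or_pos i with rfl | hip
      · simp [alphaH, ltrA]
      · have : alphaH (true :: rest) i = alphaH rest (i - 1) := by
          simp [alphaH, ltrA, Nat.pos_iff_ne_zero.mp hip]
        rw [this]; exact ih _

lemma count_map_not (w : List Bool) : (w.map (!·)).count ltrB = w.count ltrA := by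
  induction w with
  | nil => rfl
  | cons x rest ih => cases x <;> simp [List.count_cons, ltrA, ltrB] at * <;> omega

lemma betaH_le_countA (w : List Bool) (i : ℕ) : betaH w i ≤ w.count ltrA := by
  have h := alphaH_le_countB (w.map (!·)) i
  rwa [count_map_not] at h

lemma beta_adj (w : List Bool) (i j : ℕ) (hj : j < w.count ltrA) :
    alphaH w j ≤ i ↔ j < betaH w i := by
  induction w generalizing i j with
  | nil => simp [ltrA] at hj
  | cons x rest ih =>
    cases x with
    | true =>
      have hb : betaH (true :: rest) i = betaH rest i + 1 := by
        simp [betaH, alphaH, ltrA, ltrB]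
      rw [hb]
      rcases Nat.eq_zero_or_pos j with rfl | hjp
      · simp [alphaH, ltrA]
      · have hj' : j - 1 < rest.count ltrA := by
          have hcc : (true :: rest).count ltrA = rest.count ltrA + 1 := by
            simp [ltrA, List.count_cons]
          omega
        have ha : alphaH (true :: rest) j = alphaH rest (j - 1) := by
          simp [alphaH, ltrA, Nat.pos_iff_ne_zero.mp hjp]
        rw [ha, ih i (j - 1) hj']
        omega
    | false =>
      have hj' : j < rest.count ltrA := by
        have hcc : (false :: rest).count ltrA = rest.count ltrA := by
          simp [ltrA, List.count_cons]
        omega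
      have ha : alphaH (false :: rest) j = alphaH rest j + 1 := by simp [alphaH, ltrA]
      rcases Nat.eq_zero_or_pos i with rfl | hip
      · have hb : betaH (false :: rest) 0 = 0 := by simp [betaH, alphaH, ltrA]
        rw [ha, hb]; omega
      · have hb : betaH (false :: rest) i = betaH rest (i - 1) := by
          simp [betaH, alphaH, ltrA, Nat.pos_iff_ne_zero.mp hip]
        rw [ha, hb, ← ih (i - 1) j hj']
        omega

lemma betaH_of_min (w v u : List Bool) (hca : v.count ltrA = w.count ltrA)
    (hua : u.count ltrA = w.count ltrA)
    (hmin : ∀ j < w.count ltrA, alphaH u j = min (alphaH w j) (alphaH v j)) (i : ℕ) :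
    betaH u i = max (betaH w i) (betaH v i) := by
  have key : ∀ j, (j < betaH u i ↔ (j < betaH w i ∨ j < betaH v i)) := by
    intro j
    by_cases hj : j < w.count ltrA
    · rw [← beta_adj u i j (by omega), ← beta_adj w i j hj, ← beta_adj v i j (by omega),
        hmin j hj]
      omega
    · have b1 := betaH_le_countA u i
      have b2 := betaH_le_countA w i
      have b3 := betaH_le_countA v i
      omega
  have k1 := key (betaH u i - 1)
  have k2 := key (betaH w i - 1)
  have k3 := key (betaH v i - 1)
  omega

lemma betaH_of_max (w v u : List Bool) (hca : v.count ltrA = w.count ltrA)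
    (hua : u.count ltrA = w.count ltrA)
    (hmax : ∀ j < w.count ltrA, alphaH u j = max (alphaH w j) (alphaH v j)) (i : ℕ) :
    betaH u i = min (betaH w i) (betaH v i) := by
  have key : ∀ j, (j < betaH u i ↔ (j < betaH w i ∧ j < betaH v i)) := by
    intro j
    by_cases hj : j < w.count ltrA
    · rw [← beta_adj u i j (by omega), ← beta_adj w i j hj, ← beta_adj v i j (by omega),
        hmax j hj]
      omega
    · have b1 := betaH_le_countA u i
      have b2 := betaH_le_countA w i
      have b3 := betaH_le_countA v i
      omega
  have k1 := key (betaH u i - 1)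
  have k2 := key (betaH w i - 1)
  have k3 := key (betaH v i - 1)
  omega

lemma hull_sandwich {S1 S2 T : Set (ℝ × ℝ)} (h1 : S1.Finite) (hT : T.Finite)
    (heq : convexHull ℝ S1 = convexHull ℝ S2)
    (hsub : T ⊆ S1 ∪ S2) (hcap : S1 ∩ S2 ⊆ T) :
    convexHull ℝ T = convexHull ℝ S1 := by
  apply Set.Subset.antisymm
  · refine (convexHull_mono hsub).trans ?_
    refine convexHull_min ?_ (convex_convexHull ℝ S1)
    rintro x (hx | hx)
    · exact subset_convexHull ℝ S1 hx
    · rw [heq]; exact subset_convexHull ℝ S2 hx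
  · set K := convexHull ℝ S1 with hK
    have hKc : IsCompact K := h1.isCompact_convexHull ℝ
    have hKconv : Convex ℝ K := convex_convexHull ℝ S1
    have hE1 : K.extremePoints ℝ ⊆ S1 := extremePoints_convexHull_subset
    have hE2 : K.extremePoints ℝ ⊆ S2 := by
      rw [show K = convexHull ℝ S2 from heq]; exact extremePoints_convexHull_subset
    have hET : K.extremePoints ℝ ⊆ T := fun x hx => hcap ⟨hE1 hx, hE2 hx⟩
    have hKM := closure_convexHull_extremePoints hKc hKconv
    calc K = closure (convexHull ℝ (K.extremePoints ℝ)) := hKM.symm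
      _ ⊆ closure (convexHull ℝ T) := closure_mono (convexHull_mono hET)
      _ = convexHull ℝ T := (hT.isClosed_convexHull ℝ).closure_eq

lemma gammaA_finite (w : List Bool) : (gammaA w).Finite := by
  have h : gammaA w ⊆ (fun i : ℕ => ((i : ℝ), (alphaH w i : ℝ))) '' Set.Iio (w.count ltrA) := by
    rintro p ⟨i, hi, rfl⟩; exact ⟨i, hi, rfl⟩
  exact (((Set.finite_Iio _).image _)).subset h

lemma gammaB_finite (w : List Bool) : (gammaB w).Finite := by
  have h : gammaB w ⊆ (fun i : ℕ => ((betaH w i : ℝ), (i : ℝ))) '' Set.Iio (w.count ltrB) := by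
    rintro p ⟨i, hi, rfl⟩; exact ⟨i, hi, rfl⟩
  exact (((Set.finite_Iio _).image _)).subset h

lemma gamma_both (w v u : List Bool)
    (hca : v.count ltrA = w.count ltrA) (hcb : v.count ltrB = w.count ltrB)
    (hua : u.count ltrA = w.count ltrA) (hub : u.count ltrB = w.count ltrB)
    (hA : convexHull ℝ (gammaA w) = convexHull ℝ (gammaA v))
    (hB : convexHull ℝ (gammaB w) = convexHull ℝ (gammaB v))
    (hsel : ∀ i < w.count ltrA, alphaH u i = alphaH w i ∨ alphaH u i = alphaH v i)
    (heqc : ∀ i < w.count ltrA, alphaH w i = alphaH v i → alphaH u i = alphaH w i)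
    (hselB : ∀ i < w.count ltrB, betaH u i = betaH w i ∨ betaH u i = betaH v i)
    (heqcB : ∀ i < w.count ltrB, betaH w i = betaH v i → betaH u i = betaH w i) :
    convexHull ℝ (gammaA u) = convexHull ℝ (gammaA w) ∧
      convexHull ℝ (gammaB u) = convexHull ℝ (gammaB w) := by
  constructor
  · refine hull_sandwich (gammaA_finite w) (gammaA_finite u) hA ?_ ?_
    · rintro p ⟨i, hi, rfl⟩
      rw [hua] at hi
      rcases hsel i hi with h | h
      · exact Or.inl ⟨i, hi, by rw [h]⟩
      · exact Or.inr ⟨i, by omega, by rw [h]⟩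
    · rintro p ⟨⟨i, hi, rfl⟩, ⟨j, hj, hp⟩⟩
      have hij : (i : ℝ) = (j : ℝ) := congrArg Prod.fst hp
      have hij' : i = j := by exact_mod_cast hij
      subst hij'
      have hy : (alphaH w i : ℝ) = (alphaH v i : ℝ) := congrArg Prod.snd hp
      have hy' : alphaH w i = alphaH v i := by exact_mod_cast hy
      exact ⟨i, by omega, by rw [heqc i hi hy']⟩
  · refine hull_sandwich (gammaB_finite w) (gammaB_finite u) hB ?_ ?_
    · rintro p ⟨i, hi, rfl⟩
      rw [hub] at hi
      rcases hselB i hi with h | h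
      · exact Or.inl ⟨i, hi, by rw [h]⟩
      · exact Or.inr ⟨i, by omega, by rw [h]⟩
    · rintro p ⟨⟨i, hi, rfl⟩, ⟨j, hj, hp⟩⟩
      have hij : (i : ℝ) = (j : ℝ) := congrArg Prod.snd hp
      have hij' : i = j := by exact_mod_cast hij
      subst hij'
      have hy : (betaH w i : ℝ) = (betaH v i : ℝ) := congrArg Prod.fst hp
      have hy' : betaH w i = betaH v i := by exact_mod_cast hy
      exact ⟨i, by omega, by rw [heqcB i hi hy']⟩

/-- Structural Theorem, part (ii): if `w ∼_2 v` then the lattice meet and join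
of their staircase paths again have the same pair of height polytopes. -/
theorem meet_join_sim2 (w v : List Bool)
    (hca : v.count ltrA = w.count ltrA) (hcb : v.count ltrB = w.count ltrB)
    (hA : convexHull ℝ (gammaA w) = convexHull ℝ (gammaA v))
    (hB : convexHull ℝ (gammaB w) = convexHull ℝ (gammaB v)) :
    (∀ u : List Bool, u.count ltrA = w.count ltrA → u.count ltrB = w.count ltrB →
      (∀ i < w.count ltrA, alphaH u i = min (alphaH w i) (alphaH v i)) →
      convexHull ℝ (gammaA u) = convexHull ℝ (gammaA w) ∧
        convexHull ℝ (gammaB u) = convexHull ℝ (gammaB w)) ∧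
    (∀ u : List Bool, u.count ltrA = w.count ltrA → u.count ltrB = w.count ltrB →
      (∀ i < w.count ltrA, alphaH u i = max (alphaH w i) (alphaH v i)) →
      convexHull ℝ (gammaA u) = convexHull ℝ (gammaA w) ∧
        convexHull ℝ (gammaB u) = convexHull ℝ (gammaB w)) := by
  constructor
  · intro u hua hub hmin
    have hbeta : ∀ i, betaH u i = max (betaH w i) (betaH v i) :=
      betaH_of_min w v u hca hua hmin
    refine gamma_both w v u hca hcb hua hub hA hB ?_ ?_ ?_ ?_
    · intro i hi; rw [hmin i hi]; omega
    · intro i hi he; rw [hmin i hi]; omega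
    · intro i _; rw [hbeta i]; omega
    · intro i _ he; rw [hbeta i]; omega
  · intro u hua hub hmax
    have hbeta : ∀ i, betaH u i = min (betaH w i) (betaH v i) :=
      betaH_of_max w v u hca hua hmax
    refine gamma_both w v u hca hcb hua hub hA hB ?_ ?_ ?_ ?_
    · intro i hi; rw [hmax i hi]; omega
    · intro i hi he; rw [hmax i hi]; omega
    · intro i _; rw [hbeta i]; omega
    · intro i _ he; rw [hbeta i]; omega
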